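/- Let p > 1. Then lim_{n→∞} n^{−1} ‖T_n‖_{p,1} = 2^{1/p} [(2^p − 1) ζ(p)]^{1/p}. -/

import Mathlib

open Finset Real Filter

/-- The n×n Cauchy–Toeplitz matrix `T_n = [2/(1+2(i-j))]`. -/
noncomputable def cauchyToeplitz (n : ℕ) : Matrix (Fin n) (Fin n) ℝ :=
  fun i j => 2 / (1 + 2 * (((i : ℕ) : ℝ) - ((j : ℕ) : ℝ)))

/-- The ℓ_p norm of `T_n`: `(∑_{i,j} |a_{ij}|^p)^(1/p)`. -/
noncomputable def lpNorm (n : ℕ) (p : ℝ) : ℝ :=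
  (∑ i : Fin n, ∑ j : Fin n, |cauchyToeplitz n i j| ^ p) ^ (1 / p)

/-- The ℓ_{p,q} norm of `T_n`: `(∑_j (∑_i |a_{ij}|^p)^(q/p))^(1/q)`. -/
noncomputable def lpqNorm (n : ℕ) (p q : ℝ) : ℝ :=
  (∑ j : Fin n, (∑ i : Fin n, |cauchyToeplitz n i j| ^ p) ^ (q / p)) ^ (1 / q)

/-- The Riemann zeta function at a real argument (real-valued for real `p > 1`). -/
noncomputable def zetaR (p : ℝ) : ℝ := (riemannZeta p).re

namespace Stmt8Aux

/-- term `2^p / (2m+1)^p` -/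
noncomputable def c (p : ℝ) (m : ℕ) : ℝ := 2 ^ p * (((2 * m + 1 : ℕ) : ℝ) ^ p)⁻¹

/-- partial sums of `c` -/
noncomputable def a (p : ℝ) (k : ℕ) : ℝ := ∑ m ∈ Finset.range k, c p m

lemma c_nonneg (p : ℝ) (m : ℕ) : 0 ≤ c p m := by
  unfold c; positivity

lemma a_nonneg (p : ℝ) (k : ℕ) : 0 ≤ a p k :=
  Finset.sum_nonneg fun i _ => c_nonneg p i

lemma a_mono (p : ℝ) : Monotone (a p) := fun k l hkl =>
  Finset.sum_le_sum_of_subset_of_nonneg (Finset.range_subset_range.2 hkl)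
    (fun i _ _ => c_nonneg p i)

lemma zeta_hasSum {p : ℝ} (hp : 1 < p) :
    HasSum (fun n : ℕ => ((n : ℝ) ^ p)⁻¹) (zetaR p) := by
  have hsum : Summable (fun n : ℕ => ((n : ℝ) ^ p)⁻¹) := Real.summable_nat_rpow_inv.2 hp
  have h1 : riemannZeta p = ((∑' n : ℕ, ((n : ℝ) ^ p)⁻¹ : ℝ) : ℂ) := by
    rw [zeta_eq_tsum_one_div_nat_cpow (by simpa using hp), Complex.ofReal_tsum]
    congr 1
    funext n
    rw [one_div, Complex.ofReal_inv, Complex.ofReal_cpow (Nat.cast_nonneg n),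
      Complex.ofReal_natCast]
  have h2 : zetaR p = ∑' n : ℕ, ((n : ℝ) ^ p)⁻¹ := by
    unfold zetaR; rw [h1, Complex.ofReal_re]
  rw [h2]
  exact hsum.hasSum

lemma c_hasSum {p : ℝ} (hp : 1 < p) :
    HasSum (c p) ((2 ^ p - 1) * zetaR p) := by
  have hZ := zeta_hasSum hp
  set f : ℕ → ℝ := fun n => ((n : ℝ) ^ p)⁻¹ with hf
  have h2p : (0 : ℝ) < 2 ^ p := Real.rpow_pos_of_pos two_pos p
  have hfe : (fun k : ℕ => ((2 : ℝ) ^ p)⁻¹ * f k) = fun k => f (2 * k) := by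
    funext k
    simp only [hf]
    rw [Nat.cast_mul, Nat.cast_ofNat,
      Real.mul_rpow (by norm_num) (Nat.cast_nonneg k), mul_inv]
  have he : HasSum (fun k : ℕ => f (2 * k)) ((2 ^ p)⁻¹ * zetaR p) :=
    hfe ▸ hZ.mul_left ((2 : ℝ) ^ p)⁻¹
  have ho : Summable (fun k : ℕ => f (2 * k + 1)) :=
    hZ.summable.comp_injective (fun x y hxy => by omega)
  have hT : HasSum (fun k : ℕ => f (2 * k + 1)) (zetaR p - (2 ^ p)⁻¹ * zetaR p) := by
    have h3 := he.even_add_odd ho.hasSum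
    have h4 := hZ.unique h3
    have h5 : ∑' k : ℕ, f (2 * k + 1) = zetaR p - (2 ^ p)⁻¹ * zetaR p := by linarith
    exact h5 ▸ ho.hasSum
  have hmul := hT.mul_left ((2 : ℝ) ^ p)
  have hfun : (fun k : ℕ => (2 : ℝ) ^ p * f (2 * k + 1)) = c p := rfl
  have hsum_eq : (2 : ℝ) ^ p * (zetaR p - (2 ^ p)⁻¹ * zetaR p) = (2 ^ p - 1) * zetaR p := by
    rw [mul_sub, ← mul_assoc, mul_inv_cancel₀ h2p.ne', one_mul, sub_mul, one_mul]
  exact hsum_eq ▸ hfun ▸ hmul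

lemma inner_eq (p : ℝ) {n j : ℕ} (hjn : j ≤ n) :
    ∑ i ∈ Finset.range n, |2 / (1 + 2 * ((i : ℝ) - (j : ℝ)))| ^ p
      = a p j + a p (n - j) := by
  have key : ∀ i : ℕ, |2 / (1 + 2 * ((i : ℝ) - (j : ℝ)))| ^ p
      = 2 ^ p * (|1 + 2 * ((i : ℝ) - (j : ℝ))| ^ p)⁻¹ := by
    intro i
    rw [abs_div, abs_two, Real.div_rpow (by norm_num) (abs_nonneg _), div_eq_mul_inv]
  rw [Finset.range_eq_Ico, ← Finset.sum_Ico_consecutive _ (Nat.zero_le j) hjn]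
  congr 1
  · -- lower part: i < j
    rw [← Finset.range_eq_Ico]
    unfold a
    rw [← Finset.sum_range_reflect (c p) j]
    refine Finset.sum_congr rfl fun i hi => ?_
    rw [Finset.mem_range] at hi
    obtain ⟨k, rfl⟩ : ∃ k, j = i + k + 1 := ⟨j - i - 1, by omega⟩
    rw [key]
    have h1 : i + k + 1 - 1 - i = k := by omega
    rw [h1]
    have h2 : (1 + 2 * ((i : ℝ) - ((i + k + 1 : ℕ) : ℝ))) = -(2 * (k : ℝ) + 1) := by
      push_cast; ring
    rw [h2, abs_neg, abs_of_nonneg (by positivity)]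
    unfold c
    congr 2
    push_cast
    ring
  · rw [Finset.sum_Ico_eq_sum_range]
    unfold a
    refine Finset.sum_congr rfl fun i _ => ?_
    rw [key]
    have h2 : (1 + 2 * (((j + i : ℕ) : ℝ) - (j : ℝ))) = 2 * (i : ℝ) + 1 := by
      push_cast; ring
    rw [h2, abs_of_nonneg (by positivity)]
    unfold c
    congr 2
    push_cast
    ring

lemma lpq_eq (p : ℝ) (n : ℕ) :
    lpqNorm n p 1 = ∑ j ∈ Finset.range n, (a p j + a p (n - j)) ^ (1 / p) := by
  have h1 : ∀ j : ℕ, j < n →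
      (∑ i : Fin n, |2 / (1 + 2 * (((i : ℕ) : ℝ) - (j : ℝ)))| ^ p) = a p j + a p (n - j) := by
    intro j hj
    rw [Fin.sum_univ_eq_sum_range (fun i => |2 / (1 + 2 * ((i : ℝ) - (j : ℝ)))| ^ p) n]
    exact inner_eq p hj.le
  calc lpqNorm n p 1
      = ∑ j : Fin n, (a p (j : ℕ) + a p (n - (j : ℕ))) ^ (1 / p) := by
        unfold lpqNorm
        rw [show ((1 : ℝ) / 1) = 1 by norm_num, Real.rpow_one]
        refine Finset.sum_congr rfl fun j _ => ?_
        simp only [cauchyToeplitz]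
        rw [h1 (j : ℕ) j.isLt]
    _ = ∑ j ∈ Finset.range n, (a p j + a p (n - j)) ^ (1 / p) :=
        Fin.sum_univ_eq_sum_range (fun j => (a p j + a p (n - j)) ^ (1 / p)) n

/-- column-sum function raised to `1/p` -/
noncomputable def bf (p : ℝ) (n j : ℕ) : ℝ := (a p j + a p (n - j)) ^ (1 / p)

/-- lower comparison sequence -/
noncomputable def gf (p : ℝ) (k : ℕ) : ℝ := (2 * a p k) ^ (1 / p)

lemma gf_nonneg (p : ℝ) (k : ℕ) : 0 ≤ gf p k :=
  Real.rpow_nonneg (mul_nonneg two_pos.le (a_nonneg p k)) _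

lemma lb (p : ℝ) (hp : 1 < p) (n : ℕ) :
    2 * ∑ k ∈ Finset.range (n / 2), gf p k ≤ ∑ j ∈ Finset.range n, bf p n j := by
  have hp0 : (0 : ℝ) ≤ 1 / p := by positivity
  have hsplit : ∑ j ∈ Finset.range n, bf p n j
      = ∑ j ∈ Finset.range (n / 2), bf p n j + ∑ j ∈ Finset.Ico (n / 2) n, bf p n j := by
    rw [Finset.range_eq_Ico,
      ← Finset.sum_Ico_consecutive _ (Nat.zero_le _) (Nat.div_le_self n 2), Finset.range_eq_Ico]
  have h1 : ∑ k ∈ Finset.range (n / 2), gf p k ≤ ∑ j ∈ Finset.range (n / 2), bf p n j := by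
    refine Finset.sum_le_sum fun j hj => ?_
    rw [Finset.mem_range] at hj
    refine Real.rpow_le_rpow (mul_nonneg two_pos.le (a_nonneg p j)) ?_ hp0
    have := a_mono p (show j ≤ n - j by omega)
    rw [two_mul]
    linarith
  have h2 : ∑ k ∈ Finset.range (n / 2), gf p k ≤ ∑ j ∈ Finset.Ico (n / 2) n, bf p n j := by
    have step1 : ∑ j ∈ Finset.Ico (n / 2) n, gf p (n - 1 - j)
        ≤ ∑ j ∈ Finset.Ico (n / 2) n, bf p n j := by
      refine Finset.sum_le_sum fun j hj => ?_
      rw [Finset.mem_Ico] at hj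
      refine Real.rpow_le_rpow (mul_nonneg two_pos.le (a_nonneg p _)) ?_ hp0
      have e1 := a_mono p (show n - 1 - j ≤ j by omega)
      have e2 := a_mono p (show n - 1 - j ≤ n - j by omega)
      rw [two_mul]
      exact add_le_add e1 e2
    have step2 : ∑ j ∈ Finset.Ico (n / 2) n, gf p (n - 1 - j)
        = ∑ i ∈ Finset.range (n - n / 2), gf p (n - n / 2 - 1 - i) := by
      rw [Finset.sum_Ico_eq_sum_range]
      refine Finset.sum_congr rfl fun i _ => ?_
      congr 1
      omega
    have step3 : ∑ i ∈ Finset.range (n - n / 2), gf p (n - n / 2 - 1 - i)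
        = ∑ i ∈ Finset.range (n - n / 2), gf p i :=
      Finset.sum_range_reflect (gf p) (n - n / 2)
    have step4 : ∑ k ∈ Finset.range (n / 2), gf p k
        ≤ ∑ i ∈ Finset.range (n - n / 2), gf p i :=
      Finset.sum_le_sum_of_subset_of_nonneg (Finset.range_subset_range.2 (by omega))
        (fun i _ _ => gf_nonneg p i)
    linarith
  rw [hsplit, two_mul]
  exact add_le_add h1 h2

end Stmt8Aux

open Stmt8Aux

theorem stmt_8 (p : ℝ) (hp : 1 < p) :
    Tendsto (fun n : ℕ => (n : ℝ)⁻¹ * lpqNorm n p 1) atTop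
      (nhds (2 ^ (1 / p) * ((2 ^ p - 1) * zetaR p) ^ (1 / p))) := by
  have hp0 : (0 : ℝ) < p := lt_trans one_pos hp
  have hc := c_hasSum hp
  set U : ℝ := (2 ^ p - 1) * zetaR p with hU
  have hU0 : 0 ≤ U := hasSum_le (fun i => c_nonneg p i) hasSum_zero hc
  have haU : ∀ k, a p k ≤ U := fun k =>
    sum_le_hasSum (Finset.range k) (fun i _ => c_nonneg p i) hc
  have haT : Tendsto (a p) atTop (nhds U) := hc.tendsto_sum_nat
  set L : ℝ := (2 * U) ^ (1 / p) with hL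
  have hgoalL : (2 : ℝ) ^ (1 / p) * U ^ (1 / p) = L :=
    (Real.mul_rpow (by norm_num) hU0).symm
  rw [hgoalL]
  have hfun : (fun n : ℕ => (n : ℝ)⁻¹ * lpqNorm n p 1)
      = fun n : ℕ => (n : ℝ)⁻¹ * ∑ j ∈ Finset.range n, bf p n j := by
    funext n
    rw [lpq_eq p n]
    rfl
  rw [hfun]
  -- the lower comparison sequence tends to L
  have hgT : Tendsto (gf p) atTop (nhds L) := by
    have := (haT.const_mul (2 : ℝ)).rpow_const (Or.inr (by positivity : (0:ℝ) ≤ 1 / p))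
    exact this
  have hA : Tendsto (fun m : ℕ => (m : ℝ)⁻¹ * ∑ i ∈ Finset.range m, gf p i) atTop (nhds L) :=
    hgT.cesaro
  have hhalf : Tendsto (fun n : ℕ => n / 2) atTop atTop :=
    tendsto_atTop_atTop.2 fun b => ⟨2 * b, fun n hn => by omega⟩
  have hA2 := hA.comp hhalf
  have hr : Tendsto (fun n : ℕ => ((2 * (n / 2) : ℕ) : ℝ) / n) atTop (nhds 1) := by
    apply tendsto_of_tendsto_of_tendsto_of_le_of_le'
      (g := fun n : ℕ => 1 - (n : ℝ)⁻¹) (h := fun _ : ℕ => (1 : ℝ))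
    · simpa using tendsto_const_nhds.sub (tendsto_inv_atTop_nhds_zero_nat (𝕜 := ℝ))
    · exact tendsto_const_nhds
    · filter_upwards [eventually_ge_atTop 1] with n hn
      have hn0 : (0 : ℝ) < n := by exact_mod_cast hn
      have h1 : ((n : ℝ) - 1) ≤ ((2 * (n / 2) : ℕ) : ℝ) := by
        have h' : n - 1 ≤ 2 * (n / 2) := by omega
        have := (Nat.cast_le (α := ℝ)).2 h'
        push_cast at this
        calc (n : ℝ) - 1 ≤ ((n : ℝ) - 1) := le_refl _
          _ ≤ ((2 * (n / 2) : ℕ) : ℝ) := by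
              have hcast : ((n - 1 : ℕ) : ℝ) = (n : ℝ) - 1 := by
                have : (1 : ℕ) ≤ n := hn
                push_cast [this]
                ring
              rw [← hcast]
              exact_mod_cast h'
      have heq : 1 - (n : ℝ)⁻¹ = ((n : ℝ) - 1) / n := by field_simp
      rw [heq, div_le_div_iff_of_pos_right hn0]
      exact h1
    · filter_upwards [eventually_ge_atTop 1] with n hn
      have hn0 : (0 : ℝ) < n := by exact_mod_cast hn
      rw [div_le_one hn0]
      exact_mod_cast Nat.mul_div_le n 2
  have hlo : Tendsto (fun n : ℕ => (n : ℝ)⁻¹ * (2 * ∑ k ∈ Finset.range (n / 2), gf p k))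
      atTop (nhds L) := by
    have hmul := hr.mul hA2
    rw [one_mul] at hmul
    refine hmul.congr' ?_
    filter_upwards [eventually_ge_atTop 2] with n hn
    have hm : 1 ≤ n / 2 := by omega
    have hm0 : (((n / 2 : ℕ)) : ℝ) ≠ 0 := by
      have : (0 : ℕ) < n / 2 := hm
      exact_mod_cast this.ne'
    have hn0 : ((n : ℕ) : ℝ) ≠ 0 := by
      have : (0 : ℕ) < n := by omega
      exact_mod_cast this.ne'
    show ((2 * (n / 2) : ℕ) : ℝ) / n * ((((n / 2 : ℕ)) : ℝ)⁻¹ * ∑ i ∈ Finset.range (n / 2), gf p i)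
        = (n : ℝ)⁻¹ * (2 * ∑ k ∈ Finset.range (n / 2), gf p k)
    push_cast
    field_simp
  -- squeeze
  refine tendsto_of_tendsto_of_tendsto_of_le_of_le' hlo tendsto_const_nhds ?_ ?_
  · filter_upwards with n
    exact mul_le_mul_of_nonneg_left (lb p hp n) (inv_nonneg.2 (Nat.cast_nonneg n))
  · filter_upwards [eventually_ge_atTop 1] with n hn
    have hn0 : (0 : ℝ) < n := by exact_mod_cast hn
    have hbnd : ∀ j ∈ Finset.range n, bf p n j ≤ L := by
      intro j hj
      refine Real.rpow_le_rpow (add_nonneg (a_nonneg p j) (a_nonneg p _)) ?_ (by positivity)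
      have := haU j
      have := haU (n - j)
      linarith [two_mul U]
    calc (n : ℝ)⁻¹ * ∑ j ∈ Finset.range n, bf p n j
        ≤ (n : ℝ)⁻¹ * ∑ j ∈ Finset.range n, L := by
          exact mul_le_mul_of_nonneg_left (Finset.sum_le_sum hbnd) (by positivity)
      _ = L := by
          rw [Finset.sum_const, Finset.card_range, nsmul_eq_mul]
          field_simp
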